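/- Let p, q be distinct primes. The number of coefficients of Φ_{pq}(x) equal to 1 is (p⁻¹ mod q)·(q⁻¹ mod p), and the number equal to −1 is (p⁻¹ mod q)·(q⁻¹ mod p) − 1. -/

import Mathlib

open Polynomial Finset

private lemma aux_inj {p q : ℕ} (hq : 0 < q) (hco : Nat.Coprime p q)
    {i j i' j' : ℕ} (hi : i < q) (hi' : i' < q)
    (h : p * i + q * j = p * i' + q * j') : i = i' ∧ j = j' := by
  have h' : p * i + j * q = p * i' + j' * q := by
    rw [mul_comm j q, mul_comm j' q]; exact h
  have h1 : p * i ≡ p * i' [MOD q] := by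
    have := congrArg (· % q) h'
    exact (by simpa [Nat.add_mul_mod_self_right] using this : p * i % q = p * i' % q)
  have h2 : i ≡ i' [MOD q] := Nat.ModEq.cancel_left_of_coprime hco.symm h1
  have hii : i = i' := by
    have := h2
    unfold Nat.ModEq at this
    rwa [Nat.mod_eq_of_lt hi, Nat.mod_eq_of_lt hi'] at this
  subst hii
  exact ⟨rfl, Nat.eq_of_mul_eq_mul_left hq (Nat.add_left_cancel h)⟩

/-- For distinct primes `p`, `q`, the number of coefficients of `Φ_{pq}(x)`
equal to `1` is `(p⁻¹ mod q)·(q⁻¹ mod p)`, and the number equal to `-1` is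
`(p⁻¹ mod q)·(q⁻¹ mod p) − 1`. -/
theorem stmt6 (p q : ℕ) (hp : p.Prime) (hq : q.Prime) (hpq : p ≠ q) :
    ((Finset.range (p * q)).filter
        (fun k => (cyclotomic (p * q) ℤ).coeff k = 1)).card =
      ((p : ZMod q)⁻¹).val * ((q : ZMod p)⁻¹).val ∧
    ((Finset.range (p * q)).filter
        (fun k => (cyclotomic (p * q) ℤ).coeff k = -1)).card =
      ((p : ZMod q)⁻¹).val * ((q : ZMod p)⁻¹).val - 1 := by
  haveI : Fact p.Prime := ⟨hp⟩
  haveI : Fact q.Prime := ⟨hq⟩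
  have hco : Nat.Coprime p q := (Nat.coprime_primes hp hq).mpr hpq
  have hco' : Nat.Coprime q p := hco.symm
  set r := ((p : ZMod q)⁻¹).val with hr_def
  set s := ((q : ZMod p)⁻¹).val with hs_def
  -- basic facts about r and s
  have hpz : (p : ZMod q) ≠ 0 := by
    rw [Ne, ZMod.natCast_eq_zero_iff]
    intro hdvd
    exact hpq ((Nat.prime_dvd_prime_iff_eq hq hp).mp hdvd).symm
  have hqz : (q : ZMod p) ≠ 0 := by
    rw [Ne, ZMod.natCast_eq_zero_iff]
    intro hdvd
    exact hpq ((Nat.prime_dvd_prime_iff_eq hp hq).mp hdvd)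
  have hrq : r < q := ZMod.val_lt _
  have hsp : s < p := ZMod.val_lt _
  have hr0 : 0 < r := by
    rcases Nat.eq_zero_or_pos r with h0 | h; swap; · exact h
    exfalso
    exact inv_ne_zero hpz (ZMod.val_eq_zero _ |>.mp h0)
  have hs0 : 0 < s := by
    rcases Nat.eq_zero_or_pos s with h0 | h; swap; · exact h
    exfalso
    exact inv_ne_zero hqz (ZMod.val_eq_zero _ |>.mp h0)
  -- the key arithmetic identity  p*r + q*s = p*q + 1
  have hpr : p * r ≡ 1 [MOD q] := by
    have : ((p * r : ℕ) : ZMod q) = ((1 : ℕ) : ZMod q) := by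
      push_cast
      rw [hr_def, ZMod.natCast_val, ZMod.cast_id, mul_inv_cancel₀ hpz]
    exact (ZMod.natCast_eq_natCast_iff _ _ _).mp this
  have hqs : q * s ≡ 1 [MOD p] := by
    have : ((q * s : ℕ) : ZMod p) = ((1 : ℕ) : ZMod p) := by
      push_cast
      rw [hs_def, ZMod.natCast_val, ZMod.cast_id, mul_inv_cancel₀ hqz]
    exact (ZMod.natCast_eq_natCast_iff _ _ _).mp this
  have hrs : p * r + q * s = p * q + 1 := by
    have hmq : p * r + q * s ≡ 1 [MOD q] := by
      have : p * r + q * s ≡ 1 + 0 [MOD q] :=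
        hpr.add ((Nat.modEq_zero_iff_dvd).mpr (dvd_mul_right q s))
      simpa using this
    have hmp : p * r + q * s ≡ 1 [MOD p] := by
      have : p * r + q * s ≡ 0 + 1 [MOD p] :=
        ((Nat.modEq_zero_iff_dvd).mpr (dvd_mul_right p r)).add hqs
      simpa using this
    have hmpq : p * r + q * s ≡ 1 [MOD p * q] :=
      (Nat.modEq_and_modEq_iff_modEq_mul hco).mp ⟨hmp, hmq⟩
    have hmod : (p * r + q * s) % (p * q) = 1 := by
      have h1 : (1 : ℕ) % (p * q) = 1 :=
        Nat.mod_eq_of_lt (by nlinarith [hp.two_le, hq.two_le])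
      calc (p * r + q * s) % (p * q) = 1 % (p * q) := hmpq
        _ = 1 := h1
    obtain ⟨k, hkdef⟩ : ∃ k, p * r + q * s = p * q * k + 1 :=
      ⟨(p * r + q * s) / (p * q), by
        conv_lhs => rw [← Nat.div_add_mod (p * r + q * s) (p * q)]
        rw [hmod, mul_comm (p * q)]⟩
    have hub : p * r + q * s < 2 * (p * q) := by
      have h1 : p * r ≤ p * (q - 1) := Nat.mul_le_mul_left p (by omega)
      have h2 : q * s ≤ q * (p - 1) := Nat.mul_le_mul_left q (by omega)
      have e1 : p * (q - 1) + p * 1 = p * q := by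
        rw [← Nat.mul_add, Nat.sub_add_cancel hq.one_lt.le]
      have e2 : q * (p - 1) + q * 1 = q * p := by
        rw [← Nat.mul_add, Nat.sub_add_cancel hp.one_lt.le]
      have e3 : q * p = p * q := mul_comm q p
      have hp2 : 2 ≤ p := hp.two_le
      have hq2 : 2 ≤ q := hq.two_le
      omega
    have hlb : p ≤ p * r := Nat.le_mul_of_pos_right p hr0
    have hp2 : 2 ≤ p := hp.two_le
    have hk1 : k = 1 := by
      by_contra hne
      rcases Nat.lt_or_ge k 1 with h | h
      · interval_cases k
        omega
      · have hk2 : 2 ≤ k := by omega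
        have : p * q * 2 ≤ p * q * k := Nat.mul_le_mul_left _ hk2
        omega
    rw [hk1, mul_one] at hkdef
    omega
  -- exponent identities
  have e1 : p * (q - r) + p * r = p * q := by
    rw [← Nat.mul_add, Nat.sub_add_cancel hrq.le]
  have e2 : q * (p - s) + q * s = q * p := by
    rw [← Nat.mul_add, Nat.sub_add_cancel hsp.le]
  have e2' : q * p = p * q := mul_comm q p
  have h2exp : p * (q - r) + 1 = q * s := by omega
  have h3exp : q * (p - s) + 1 = p * r := by omega
  have h4exp : p * (q - r) + q * (p - s) + 1 = p * q := by omega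
  -- the explicit polynomial P
  set S1 : ℤ[X] := ∑ i ∈ range r, X ^ (p * i) with hS1
  set S2 : ℤ[X] := ∑ j ∈ range s, X ^ (q * j) with hS2
  set S3 : ℤ[X] := ∑ i ∈ range (q - r), X ^ (p * i) with hS3
  set S4 : ℤ[X] := ∑ j ∈ range (p - s), X ^ (q * j) with hS4
  set P : ℤ[X] := S1 * S2 - X * (S3 * S4) with hPdef
  -- geometric sums
  have g : ∀ n m : ℕ, (∑ i ∈ range m, (X : ℤ[X]) ^ (n * i)) * (X ^ n - 1)
      = X ^ (n * m) - 1 := by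
    intro n m
    simpa only [pow_mul] using geom_sum_mul ((X : ℤ[X]) ^ n) m
  -- P * (X^p-1)(X^q-1) = (X^{pq}-1)(X-1)
  have hkey : P * ((X ^ p - 1) * (X ^ q - 1)) = ((X : ℤ[X]) ^ (p * q) - 1) * (X - 1) := by
    have expand : P * ((X ^ p - 1) * (X ^ q - 1)) =
        (S1 * (X ^ p - 1)) * (S2 * (X ^ q - 1)) -
          X * ((S3 * (X ^ p - 1)) * (S4 * (X ^ q - 1))) := by ring
    rw [expand, hS1, hS2, hS3, hS4, g p r, g q s, g p (q - r), g q (p - s)]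
    have h1 : (X : ℤ[X]) ^ (p * r) * X ^ (q * s) = X ^ (p * q) * X := by
      rw [← pow_add, ← pow_succ, hrs]
    have h2 : (X : ℤ[X]) * X ^ (p * (q - r)) = X ^ (q * s) := by
      rw [← pow_succ', h2exp]
    have h3 : (X : ℤ[X]) * X ^ (q * (p - s)) = X ^ (p * r) := by
      rw [← pow_succ', h3exp]
    have h4 : (X : ℤ[X]) * (X ^ (p * (q - r)) * X ^ (q * (p - s))) = X ^ (p * q) := by
      rw [← pow_add, ← pow_succ', h4exp]
    linear_combination h1 + h2 + h3 - h4
  -- cyclotomic identity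
  have hpqpos : 0 < p * q := Nat.mul_pos hp.pos hq.pos
  have hdiv : (p * q).divisors = {1, p, q, p * q} := by
    ext d
    simp only [Nat.mem_divisors, Finset.mem_insert, Finset.mem_singleton]
    constructor
    · rintro ⟨hdvd, -⟩
      rcases Nat.dvd_mul.mp hdvd with ⟨a, b, ha, hb, rfl⟩
      rcases (hp.eq_one_or_self_of_dvd a ha) with rfl | rfl <;>
        rcases (hq.eq_one_or_self_of_dvd b hb) with rfl | rfl <;> simp
    · rintro (rfl | rfl | rfl | rfl) <;>
        exact ⟨by first | exact one_dvd _ | exact dvd_mul_right _ _ |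
          exact dvd_mul_left _ _ | exact dvd_rfl, hpqpos.ne'⟩
  have hne1p : (1 : ℕ) ≠ p := fun h => hp.one_lt.ne' h.symm
  have hne1q : (1 : ℕ) ≠ q := fun h => hq.one_lt.ne' h.symm
  have hne1pq : (1 : ℕ) ≠ p * q := by
    intro h
    nlinarith [hp.two_le, hq.two_le]
  have hneppq : p ≠ p * q := by
    intro h
    nlinarith [hp.two_le, hq.two_le]
  have hneqpq : q ≠ p * q := by
    intro h
    nlinarith [hp.two_le, hq.two_le]
  have hprodpq : cyclotomic 1 ℤ * (cyclotomic p ℤ * (cyclotomic q ℤ * cyclotomic (p * q) ℤ))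
      = X ^ (p * q) - 1 := by
    rw [← prod_cyclotomic_eq_X_pow_sub_one hpqpos, hdiv]
    rw [Finset.prod_insert (by simp [hne1p, hne1q, hne1pq]),
      Finset.prod_insert (by simp [hpq, hneppq]),
      Finset.prod_insert (by simp [hneqpq]), Finset.prod_singleton]
  have hprodp : cyclotomic 1 ℤ * cyclotomic p ℤ = X ^ p - 1 := by
    rw [← prod_cyclotomic_eq_X_pow_sub_one hp.pos, hp.divisors,
      Finset.prod_insert (by simp [hne1p]), Finset.prod_singleton]
  have hprodq : cyclotomic 1 ℤ * cyclotomic q ℤ = X ^ q - 1 := by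
    rw [← prod_cyclotomic_eq_X_pow_sub_one hq.pos, hq.divisors,
      Finset.prod_insert (by simp [hne1q]), Finset.prod_singleton]
  have hcycone : cyclotomic 1 ℤ = X - 1 := cyclotomic_one ℤ
  have hcyckey : cyclotomic (p * q) ℤ * ((X ^ p - 1) * (X ^ q - 1))
      = ((X : ℤ[X]) ^ (p * q) - 1) * (X - 1) := by
    rw [← hprodp, ← hprodq, ← hprodpq, ← hcycone]
    ring
  -- cancellation
  have hXp : ((X : ℤ[X]) ^ p - 1) ≠ 0 := by
    have := Polynomial.monic_X_pow_sub_C (1 : ℤ) hp.ne_zero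
    simpa [Polynomial.C_1] using this.ne_zero
  have hXq : ((X : ℤ[X]) ^ q - 1) ≠ 0 := by
    have := Polynomial.monic_X_pow_sub_C (1 : ℤ) hq.ne_zero
    simpa [Polynomial.C_1] using this.ne_zero
  have hP : cyclotomic (p * q) ℤ = P :=
    mul_right_cancel₀ (mul_ne_zero hXp hXq) (hcyckey.trans hkey.symm)
  -- the two exponent sets
  set f : ℕ × ℕ → ℕ := fun ij => p * ij.1 + q * ij.2 with hf
  set g2 : ℕ × ℕ → ℕ := fun ij => 1 + (p * ij.1 + q * ij.2) with hg2
  set Tpos : Finset ℕ := (range r ×ˢ range s).image f with hTpos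
  set Tneg : Finset ℕ := (range (q - r) ×ˢ range (p - s)).image g2 with hTneg
  have hinj1 : Set.InjOn f ↑(range r ×ˢ range s) := by
    rintro ⟨i, j⟩ hij ⟨i', j'⟩ hij' hfe
    simp only [coe_product, Set.mem_prod, mem_coe, mem_range] at hij hij'
    obtain ⟨h1, h2⟩ := aux_inj hq.pos hco (lt_of_lt_of_le hij.1 hrq.le)
      (lt_of_lt_of_le hij'.1 hrq.le) hfe
    exact Prod.ext h1 h2
  have hinj2 : Set.InjOn g2 ↑(range (q - r) ×ˢ range (p - s)) := by
    rintro ⟨i, j⟩ hij ⟨i', j'⟩ hij' hfe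
    simp only [coe_product, Set.mem_prod, mem_coe, mem_range] at hij hij'
    have hfe' : p * i + q * j = p * i' + q * j' := by
      simpa [hg2] using hfe
    obtain ⟨h1, h2⟩ := aux_inj hq.pos hco (by omega) (by omega) hfe'
    exact Prod.ext h1 h2
  -- sums as polynomials
  have hsum1 : S1 * S2 = ∑ k ∈ Tpos, (X : ℤ[X]) ^ k := by
    rw [hTpos, Finset.sum_image (fun x hx y hy h => hinj1 hx hy h)]
    rw [hS1, hS2, Finset.sum_mul_sum]
    rw [Finset.sum_product]
    simp [hf, pow_add]
  have hsum2 : X * (S3 * S4) = ∑ k ∈ Tneg, (X : ℤ[X]) ^ k := by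
    rw [hTneg, Finset.sum_image (fun x hx y hy h => hinj2 hx hy h)]
    rw [hS3, hS4, Finset.sum_mul_sum, Finset.sum_product]
    simp only [Finset.mul_sum]
    refine Finset.sum_congr rfl fun i _ => Finset.sum_congr rfl fun j _ => ?_
    rw [hg2]
    simp [pow_add, pow_one]
  -- coefficient formula
  have hc : ∀ k, (cyclotomic (p * q) ℤ).coeff k =
      (if k ∈ Tpos then 1 else 0) - (if k ∈ Tneg then 1 else 0) := by
    intro k
    rw [hP, hPdef, hsum1, hsum2, Polynomial.coeff_sub,
      Polynomial.finset_sum_coeff, Polynomial.finset_sum_coeff]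
    simp [Polynomial.coeff_X_pow, Finset.sum_ite_eq']
  -- disjointness
  have hdisj : ∀ k, k ∈ Tpos → k ∉ Tneg := by
    intro k hk hk'
    rw [hTpos, Finset.mem_image] at hk
    rw [hTneg, Finset.mem_image] at hk'
    obtain ⟨⟨i, j⟩, hij, hfij⟩ := hk
    obtain ⟨⟨i', j'⟩, hij', hfij'⟩ := hk'
    rw [Finset.mem_product, mem_range, mem_range] at hij hij'
    have heq : p * i + q * j = 1 + (p * i' + q * j') := by
      rw [hf] at hfij
      rw [hg2] at hfij'
      simp only [] at hfij hfij'
      omega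
    -- mod q analysis:  p*i ≡ 1 + p*i' ≡ p*(r+i') [MOD q]
    have hmodq : p * i ≡ p * (r + i') [MOD q] := by
      have c1 : p * i ≡ 1 + p * i' [MOD q] := by
        have : p * i + j * q = 1 + p * i' + j' * q := by
          rw [mul_comm j q, mul_comm j' q]; omega
        have hcng := congrArg (· % q) this
        simp only [Nat.add_mul_mod_self_right] at hcng
        exact hcng
      have c2 : (1 : ℕ) + p * i' ≡ p * r + p * i' [MOD q] :=
        Nat.ModEq.add_right _ hpr.symm
      calc p * i ≡ 1 + p * i' [MOD q] := c1
        _ ≡ p * r + p * i' [MOD q] := c2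
        _ = p * (r + i') := by ring
    have hii : i = r + i' := by
      have h2 : i ≡ r + i' [MOD q] := Nat.ModEq.cancel_left_of_coprime hco.symm hmodq
      have hi : i < q := lt_of_lt_of_le hij.1 hrq.le
      have hri : r + i' < q := by omega
      unfold Nat.ModEq at h2
      rwa [Nat.mod_eq_of_lt hi, Nat.mod_eq_of_lt hri] at h2
    omega
  -- membership in range (p*q)
  have hsub1 : Tpos ⊆ range (p * q) := by
    intro k hk
    rw [hTpos, Finset.mem_image] at hk
    obtain ⟨⟨i, j⟩, hij, rfl⟩ := hk
    rw [Finset.mem_product, mem_range, mem_range] at hij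
    rw [mem_range, hf]
    simp only []
    have b1 : p * (i + 1) ≤ p * r := Nat.mul_le_mul_left p hij.1
    have b2 : q * (j + 1) ≤ q * s := Nat.mul_le_mul_left q hij.2
    have b1' : p * i + p = p * (i + 1) := by ring
    have b2' : q * j + q = q * (j + 1) := by ring
    have hp2 : 2 ≤ p := hp.two_le
    have hq2 : 2 ≤ q := hq.two_le
    omega
  have hsub2 : Tneg ⊆ range (p * q) := by
    intro k hk
    rw [hTneg, Finset.mem_image] at hk
    obtain ⟨⟨i, j⟩, hij, rfl⟩ := hk
    rw [Finset.mem_product, mem_range, mem_range] at hij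
    rw [mem_range, hg2]
    simp only []
    have b1 : p * (i + 1) ≤ p * (q - r) := Nat.mul_le_mul_left p hij.1
    have b2 : q * (j + 1) ≤ q * (p - s) := Nat.mul_le_mul_left q hij.2
    have b1' : p * i + p = p * (i + 1) := by ring
    have b2' : q * j + q = q * (j + 1) := by ring
    have hp2 : 2 ≤ p := hp.two_le
    have hq2 : 2 ≤ q := hq.two_le
    omega
  -- the filters
  have hfilt1 : (range (p * q)).filter (fun k => (cyclotomic (p * q) ℤ).coeff k = 1) = Tpos := by
    ext k
    simp only [Finset.mem_filter, mem_range]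
    constructor
    · rintro ⟨-, h⟩
      rw [hc k] at h
      by_cases h1 : k ∈ Tpos
      · exact h1
      · exfalso
        by_cases h2 : k ∈ Tneg <;> simp [h1, h2] at h
    · intro hk
      refine ⟨mem_range.mp (hsub1 hk), ?_⟩
      rw [hc k]
      simp [hk, hdisj k hk]
  have hfilt2 : (range (p * q)).filter (fun k => (cyclotomic (p * q) ℤ).coeff k = -1) = Tneg := by
    ext k
    simp only [Finset.mem_filter, mem_range]
    constructor
    · rintro ⟨-, h⟩
      rw [hc k] at h
      by_cases h2 : k ∈ Tneg
      · exact h2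
      · exfalso
        by_cases h1 : k ∈ Tpos <;> simp [h1, h2] at h
    · intro hk
      refine ⟨mem_range.mp (hsub2 hk), ?_⟩
      rw [hc k]
      have : k ∉ Tpos := fun h => hdisj k h hk
      simp [hk, this]
  -- cards
  have hcard1 : Tpos.card = r * s := by
    rw [hTpos, Finset.card_image_of_injOn hinj1, Finset.card_product,
      Finset.card_range, Finset.card_range]
  have hcard2 : Tneg.card = r * s - 1 := by
    rw [hTneg, Finset.card_image_of_injOn hinj2, Finset.card_product,
      Finset.card_range, Finset.card_range]
    have h1 : (q - r) * (p - s) + (p * r + q * s) = p * q + r * s := by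
      have hexp : (q - r) * (p - s) + s * (q - r) = (q - r) * p := by
        rw [mul_comm s (q - r), ← Nat.mul_add, Nat.sub_add_cancel hsp.le, mul_comm]
      have hexp2 : (q - r) * p + r * p = q * p := by
        rw [← Nat.add_mul, Nat.sub_add_cancel hrq.le]
      have c1 : r * p = p * r := mul_comm r p
      have c2 : q * p = p * q := mul_comm q p
      have c3 : s * (q - r) + s * r = s * q := by
        rw [← Nat.mul_add, Nat.sub_add_cancel hrq.le]
      have c4 : s * q = q * s := mul_comm s q
      have c5 : s * r = r * s := mul_comm s r
      omega
    omega
  rw [hfilt1, hfilt2, hcard1, hcard2]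
  exact ⟨rfl, rfl⟩
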